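/- Let R = k[[t^9, t^11, t^13, t^15, t^17, t^19, t^21, t^23]], I = (t^9, t^11, t^13, t^21)R, and J = (t^15, t^17, t^19, t^23)R. Then I ∩ J = I·J, and consequently Tor_1^R(R/I, R/J) = 0. -/

import Mathlib

set_option maxHeartbeats 2000000
set_option synthInstance.maxHeartbeats 1000000

open CategoryTheory

/-- `Tor_i^R(M,N)` as an object of `ModuleCat R`. -/
noncomputable def TorM (R : Type) [CommRing R] (i : ℕ) (M N : Type) [AddCommGroup M] [Module R M]
    [AddCommGroup N] [Module R N] : ModuleCat R :=
  ((Tor (ModuleCat R) i).obj (ModuleCat.of R M)).obj (ModuleCat.of R N)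

/-- The generators `t⁹, t¹¹, t¹³, t¹⁵, t¹⁷, t¹⁹, t²¹, t²³` of the semigroup ring. -/
noncomputable def gens16 (k : Type) [Field k] : Set (PowerSeries k) :=
  {PowerSeries.X ^ 9, PowerSeries.X ^ 11, PowerSeries.X ^ 13, PowerSeries.X ^ 15,
    PowerSeries.X ^ 17, PowerSeries.X ^ 19, PowerSeries.X ^ 21, PowerSeries.X ^ 23}

/-- The numerical semigroup ring `R = k[[t⁹,t¹¹,t¹³,t¹⁵,t¹⁷,t¹⁹,t²¹,t²³]] ⊆ k[[t]]`. -/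
noncomputable def R16 (k : Type) [Field k] : Subalgebra k (PowerSeries k) :=
  Algebra.adjoin k (gens16 k)

/-- The element `tⁿ` of `R16 k`, for `n` a generating exponent. -/
noncomputable def t16 (k : Type) [Field k] (n : ℕ)
    (h : (PowerSeries.X : PowerSeries k) ^ n ∈ gens16 k) : R16 k :=
  ⟨PowerSeries.X ^ n, Algebra.subset_adjoin h⟩

/-- The ideal `I = (t⁹, t¹¹, t¹³, t²¹)` of `R16 k`. -/
noncomputable def I16 (k : Type) [Field k] : Ideal (R16 k) :=
  Ideal.span {t16 k 9 (Set.mem_insert _ _),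
    t16 k 11 (Set.mem_insert_of_mem _ (Set.mem_insert _ _)),
    t16 k 13 (Set.mem_insert_of_mem _ (Set.mem_insert_of_mem _ (Set.mem_insert _ _))),
    t16 k 21 (Set.mem_insert_of_mem _ (Set.mem_insert_of_mem _ (Set.mem_insert_of_mem _
      (Set.mem_insert_of_mem _ (Set.mem_insert_of_mem _ (Set.mem_insert_of_mem _
        (Set.mem_insert _ _)))))))}

/-- The ideal `J = (t¹⁵, t¹⁷, t¹⁹, t²³)` of `R16 k`. -/
noncomputable def J16 (k : Type) [Field k] : Ideal (R16 k) :=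
  Ideal.span {t16 k 15 (Set.mem_insert_of_mem _ (Set.mem_insert_of_mem _
      (Set.mem_insert_of_mem _ (Set.mem_insert _ _)))),
    t16 k 17 (Set.mem_insert_of_mem _ (Set.mem_insert_of_mem _ (Set.mem_insert_of_mem _
      (Set.mem_insert_of_mem _ (Set.mem_insert _ _))))),
    t16 k 19 (Set.mem_insert_of_mem _ (Set.mem_insert_of_mem _ (Set.mem_insert_of_mem _
      (Set.mem_insert_of_mem _ (Set.mem_insert_of_mem _ (Set.mem_insert _ _)))))),
    t16 k 23 (Set.mem_insert_of_mem _ (Set.mem_insert_of_mem _ (Set.mem_insert_of_mem _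
      (Set.mem_insert_of_mem _ (Set.mem_insert_of_mem _ (Set.mem_insert_of_mem _
        (Set.mem_insert_of_mem _ rfl)))))))}

open CategoryTheory Limits PowerSeries TensorProduct

noncomputable section
variable {R : Type} [CommRing R] (J : Ideal R)

def QJ : ProjectiveResolution (ModuleCat.of R ↥J) := ProjectiveResolution.of _

def PCX : ℕ → ModuleCat R
  | 0 => ModuleCat.of R R
  | (n+1) => (QJ J).complex.X n

def PCd : ∀ n : ℕ, PCX J (n+1) ⟶ PCX J n
  | 0 => (QJ J).π.f 0 ≫ ModuleCat.ofHom J.subtype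
  | (n+1) => (QJ J).complex.d (n+1) n

lemma PCd_comp (n : ℕ) : PCd J (n+1) ≫ PCd J n = 0 := by
  match n with
  | 0 =>
    show (QJ J).complex.d 1 0 ≫ ((QJ J).π.f 0 ≫ ModuleCat.ofHom J.subtype) = 0
    exact (Category.assoc _ _ _).symm.trans (by rw [(QJ J).complex_d_comp_π_f_zero]; exact zero_comp)
  | (n+1) =>
    show (QJ J).complex.d (n+2) (n+1) ≫ (QJ J).complex.d (n+1) n = 0
    simp

def PC : ChainComplex (ModuleCat R) ℕ := ChainComplex.of (PCX J) (PCd J) (PCd_comp J)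

lemma PC_d10 : (PC J).d 1 0 = (QJ J).π.f 0 ≫ ModuleCat.ofHom J.subtype :=
  ChainComplex.of_d (PCX J) (PCd J) 0

lemma PC_d_succ (n : ℕ) : (PC J).d (n+2) (n+1) = (QJ J).complex.d (n+1) n :=
  ChainComplex.of_d (PCX J) (PCd J) (n+1)

lemma d10_mkQ : (PC J).d 1 0 ≫ ModuleCat.ofHom J.mkQ = 0 := by
  rw [PC_d10]
  refine (Category.assoc _ _ _).trans ?_
  have : (ModuleCat.ofHom (J.mkQ.comp J.subtype) : ModuleCat.of R ↥J ⟶ ModuleCat.of R (R ⧸ J)) = 0 := by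
    ext x
    simpa using (Submodule.Quotient.mk_eq_zero J).2 x.2
  exact (congrArg (fun g => (QJ J).π.f 0 ≫ g) (show ModuleCat.ofHom J.subtype ≫ ModuleCat.ofHom J.mkQ
      = ModuleCat.ofHom (J.mkQ.comp J.subtype) from rfl)).trans
    ((congrArg (fun g => (QJ J).π.f 0 ≫ g) this).trans comp_zero)

def PCπ : PC J ⟶ (ChainComplex.single₀ (ModuleCat R)).obj (ModuleCat.of R (R ⧸ J)) :=
  (ChainComplex.toSingle₀Equiv _ _).symm ⟨ModuleCat.ofHom J.mkQ, d10_mkQ J⟩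
end

noncomputable section
variable {R : Type} [CommRing R] (J : Ideal R)

lemma Qexact0 : ∀ x, (QJ J).π.f 0 x = 0 → ∃ y, (QJ J).complex.d 1 0 y = x :=
  (ShortComplex.moduleCat_exact_iff _).1 (QJ J).exact₀

lemma Qexact_succ (n : ℕ) : ∀ x, (QJ J).complex.d (n+1) n x = 0 →
    ∃ y, (QJ J).complex.d (n+2) (n+1) y = x := by
  have h := (QJ J).complex_exactAt_succ n
  rw [HomologicalComplex.exactAt_iff' _ (n+2) (n+1) n (by simp) (by simp)] at h
  exact (ShortComplex.moduleCat_exact_iff _).1 h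

lemma PC_exactAt_succ (n : ℕ) : (PC J).ExactAt (n+1) := by
  rw [HomologicalComplex.exactAt_iff' _ (n+2) (n+1) n (by simp) (by simp),
    ShortComplex.moduleCat_exact_iff]
  match n with
  | 0 =>
    intro x hx
    have hx' : (PC J).d 1 0 x = 0 := hx
    rw [PC_d10] at hx'
    have : (QJ J).π.f 0 x = 0 := Subtype.ext hx'
    obtain ⟨y, hy⟩ := Qexact0 J x this
    refine ⟨y, ?_⟩
    show (PC J).d 2 1 y = x
    rw [PC_d_succ]; exact hy
  | (n+1) =>
    intro x hx
    have hx' : (PC J).d (n+2) (n+1) x = 0 := hx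
    rw [PC_d_succ] at hx'
    obtain ⟨y, hy⟩ := Qexact_succ J n x hx'
    refine ⟨y, ?_⟩
    show (PC J).d (n+3) (n+2) y = x
    rw [PC_d_succ]; exact hy
end

noncomputable section
variable {R : Type} [CommRing R] (J : Ideal R)

lemma PCπ_f0 : (PCπ J).f 0 = ModuleCat.ofHom J.mkQ :=
  ChainComplex.toSingle₀Equiv_symm_apply_f_zero _ _

lemma Qsurj0 : Function.Surjective ((QJ J).π.f 0) :=
  (ModuleCat.epi_iff_surjective _).1 inferInstance

instance PCπ_quasiIso : QuasiIso (PCπ J) := by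
  refine ⟨fun n => ?_⟩
  cases n with
  | zero =>
    rw [ChainComplex.quasiIsoAt₀_iff, ShortComplex.quasiIso_iff_of_zeros']
    · constructor
      · rw [ShortComplex.moduleCat_exact_iff]
        intro x hx
        have hx2 : (PCπ J).f 0 x = 0 := hx
        rw [PCπ_f0] at hx2
        have hx' : J.mkQ x = 0 := hx2
        have mem : x ∈ J := (Submodule.Quotient.mk_eq_zero J).1 hx'
        obtain ⟨y, hy⟩ := Qsurj0 J ⟨x, mem⟩
        refine ⟨y, ?_⟩
        show (PC J).d 1 0 y = x
        rw [PC_d10]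
        show (J.subtype) ((QJ J).π.f 0 y) = x
        rw [hy]
        rfl
      · show Epi ((PCπ J).f 0)
        rw [PCπ_f0]
        exact (ModuleCat.epi_iff_surjective _).2 (Submodule.mkQ_surjective J)
    all_goals rfl
  | succ n =>
    rw [quasiIsoAt_iff_exactAt']
    · exact PC_exactAt_succ J n
    · apply ChainComplex.exactAt_succ_single_obj

def PRes : ProjectiveResolution (ModuleCat.of R (R ⧸ J)) where
  complex := PC J
  projective n := by
    show Projective (PCX J n)
    match n with
    | 0 => exact ModuleCat.projective_of_free (Module.Basis.singleton PUnit.{1} R)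
    | (n+1) => exact (QJ J).projective n
  π := PCπ J
end

noncomputable section
open TensorProduct
variable {R : Type} [CommRing R] (I J : Ideal R)

lemma lTensor_subtype_injective (h : I ⊓ J ≤ I * J) :
    Function.Injective (LinearMap.lTensor (R ⧸ I) J.subtype) := by
  have hle : (I • (⊤ : Submodule R ↥J)) ≤ Submodule.comap J.subtype I := by
    intro x hx
    refine Submodule.smul_induction_on hx ?_ ?_
    · intro r hr n _
      show ((r • n : ↥J) : R) ∈ I
      simpa [smul_eq_mul] using I.mul_mem_right (↑n) hr
    · intro a b ha hb
      exact add_mem ha hb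
  set q := TensorProduct.quotTensorEquivQuotSMul (↥J) I with hq
  set f : (↥J ⧸ (I • (⊤ : Submodule R ↥J))) →ₗ[R] (R ⧸ I) :=
    Submodule.mapQ (I • (⊤ : Submodule R ↥J)) (I : Submodule R R) J.subtype hle with hf
  have hfinj : Function.Injective f := by
    rw [← LinearMap.ker_eq_bot, eq_bot_iff]
    intro z hz
    obtain ⟨j, rfl⟩ := Submodule.Quotient.mk_surjective _ z
    rw [LinearMap.mem_ker, hf, Submodule.mapQ_apply] at hz
    have hj : (j : R) ∈ I := (Submodule.Quotient.mk_eq_zero _).1 hz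
    have hj2 : (j : R) ∈ I * J := h ⟨hj, j.2⟩
    have hmap : Submodule.map J.subtype (I • (⊤ : Submodule R ↥J)) = I * J := by
      rw [Submodule.map_smul'', Submodule.map_top, Submodule.range_subtype,
        Ideal.smul_eq_mul]
    rw [← hmap] at hj2
    obtain ⟨j', hj', hjj⟩ := hj2
    have : j' = j := Subtype.ext hjj
    subst this
    simpa using (Submodule.Quotient.mk_eq_zero _).2 hj'
  have key : ∀ z, (TensorProduct.rid R (R ⧸ I)) (LinearMap.lTensor (R ⧸ I) J.subtype z)
      = f (q z) := by
    have heq : (TensorProduct.rid R (R ⧸ I)).toLinearMap ∘ₗ LinearMap.lTensor (R ⧸ I) J.subtype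
        = f ∘ₗ (q : _ ≃ₗ[R] _).toLinearMap := by
      apply TensorProduct.ext'
      intro x j
      obtain ⟨r, rfl⟩ := Ideal.Quotient.mk_surjective x
      simp only [LinearMap.coe_comp, Function.comp_apply, LinearMap.lTensor_tmul,
        LinearEquiv.coe_coe, TensorProduct.rid_tmul, hq,
        TensorProduct.quotTensorEquivQuotSMul_mk_tmul, hf, Submodule.mapQ_apply]
      rw [show ((Submodule.subtype J) (r • j) : R) = (j : R) • r by
        show r • (j : R) = (j : R) • r
        rw [smul_eq_mul, smul_eq_mul, mul_comm]]
      rw [Submodule.Quotient.mk_smul]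
      rfl
    intro z
    exact DFunLike.congr_fun heq z
  intro a b hab
  have : f (q a) = f (q b) := by rw [← key, ← key, hab]
  exact q.injective (hfinj this)

noncomputable section
variable {R : Type} [CommRing R] (I J : Ideal R)

theorem tor_subsingleton (h : I ⊓ J ≤ I * J) :
    Subsingleton (TorM R 1 (R ⧸ I) (R ⧸ J)) := by
  set F := (MonoidalCategory.tensoringLeft (ModuleCat R)).obj (ModuleCat.of R (R ⧸ I)) with hF
  -- function-level exactness of Q tensored
  have hd0 : Function.Exact ((QJ J).complex.d 1 0).hom ((QJ J).π.f 0).hom := by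
    intro y
    constructor
    · intro hy
      exact Qexact0 J y hy
    · rintro ⟨x, rfl⟩
      have := (QJ J).complex_d_comp_π_f_zero
      exact congrArg (fun g => ModuleCat.Hom.hom g x) this
  have hTex : Function.Exact (LinearMap.lTensor (R ⧸ I) ((QJ J).complex.d 1 0).hom)
      (LinearMap.lTensor (R ⧸ I) ((QJ J).π.f 0).hom) :=
    lTensor_exact (R ⧸ I) hd0 (Qsurj0 J)
  have he : ((F.mapHomologicalComplex _).obj (PRes J).complex).ExactAt 1 := by
    rw [HomologicalComplex.exactAt_iff' _ 2 1 0 (by simp) (by simp),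
      ShortComplex.moduleCat_exact_iff]
    intro x hx
    have hx1 : F.map ((PC J).d 1 0) x = 0 := hx
    rw [PC_d10] at hx1
    have e := F.map_comp ((QJ J).π.f 0) (ModuleCat.ofHom J.subtype)
    replace hx1 : (F.map ((QJ J).π.f 0) ≫ F.map (ModuleCat.ofHom J.subtype)) x = 0 := by
      rw [← e]; exact hx1
    have hx2 : (LinearMap.lTensor (R ⧸ I) (J.subtype))
        ((LinearMap.lTensor (R ⧸ I) ((QJ J).π.f 0).hom) x) = 0 := hx1
    have hx3 : (LinearMap.lTensor (R ⧸ I) ((QJ J).π.f 0).hom) x = 0 := by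
      apply lTensor_subtype_injective I J h
      rw [hx2]; exact (map_zero _).symm
    obtain ⟨y, hy⟩ := (hTex _).1 hx3
    refine ⟨y, ?_⟩
    show F.map ((PC J).d 2 1) y = x
    rw [PC_d_succ]
    exact hy
  have hz : IsZero ((((F.mapHomologicalComplex _).obj (PRes J).complex)).homology 1) :=
    (HomologicalComplex.exactAt_iff_isZero_homology _ _).1 he
  have hiso := (PRes J).isoLeftDerivedObj F 1
  have hzero : IsZero ((F.leftDerived 1).obj (ModuleCat.of R (R ⧸ J))) :=
    IsZero.of_iso hz hiso
  have hzero2 : IsZero (TorM R 1 (R ⧸ I) (R ⧸ J)) := hzero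
  have hid : (𝟙 (TorM R 1 (R ⧸ I) (R ⧸ J)) : _ ⟶ _) = 0 := hzero2.eq_of_src _ _
  refine ⟨fun a b => ?_⟩
  have ha : a = 0 := by
    have := congrArg (fun g => ModuleCat.Hom.hom g a) hid
    simpa using this
  have hb : b = 0 := by
    have := congrArg (fun g => ModuleCat.Hom.hom g b) hid
    simpa using this
  rw [ha, hb]
end


section PartA

def inS (n : ℕ) : Prop := n = 0 ∨ (9 ≤ n ∧ n ≠ 10 ∧ n ≠ 12 ∧ n ≠ 14 ∧ n ≠ 16 ∧ n ≠ 25)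

lemma inS_add {a b : ℕ} (ha : inS a) (hb : inS b) : inS (a + b) := by
  unfold inS at *; omega

variable {k : Type} [Field k]

lemma coeff_mul_ne_zero {f g : PowerSeries k} {n : ℕ} (h : (coeff n) (f * g) ≠ 0) :
    ∃ i j, i + j = n ∧ coeff i f ≠ 0 ∧ coeff j g ≠ 0 := by
  by_contra hc
  push_neg at hc
  apply h
  rw [coeff_mul]
  apply Finset.sum_eq_zero
  rintro ⟨i, j⟩ hij
  rw [Finset.HasAntidiagonal.mem_antidiagonal] at hij
  rcases eq_or_ne (coeff i f) 0 with h1 | h1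
  · rw [h1, zero_mul]
  · rw [hc i j hij h1, mul_zero]

lemma R16_support {f : PowerSeries k} (hf : f ∈ R16 k) :
    (∀ n, coeff n f ≠ 0 → inS n) ∧ {n | coeff n f ≠ 0}.Finite := by
  induction hf using Algebra.adjoin_induction with
  | mem x hx =>
    have : ∃ m : ℕ, inS m ∧ x = X ^ m := by
      simp only [gens16, Set.mem_insert_iff, Set.mem_singleton_iff] at hx
      rcases hx with rfl|rfl|rfl|rfl|rfl|rfl|rfl|rfl
      · exact ⟨9, by unfold inS; omega, rfl⟩
      · exact ⟨11, by unfold inS; omega, rfl⟩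
      · exact ⟨13, by unfold inS; omega, rfl⟩
      · exact ⟨15, by unfold inS; omega, rfl⟩
      · exact ⟨17, by unfold inS; omega, rfl⟩
      · exact ⟨19, by unfold inS; omega, rfl⟩
      · exact ⟨21, by unfold inS; omega, rfl⟩
      · exact ⟨23, by unfold inS; omega, rfl⟩
    obtain ⟨m, hm, rfl⟩ := this
    constructor
    · intro n hn
      rw [coeff_X_pow] at hn
      rcases eq_or_ne n m with rfl | hne
      · exact hm
      · simp [hne] at hn
    · apply Set.Finite.subset (Set.finite_singleton m)
      intro n hn
      simp only [Set.mem_setOf_eq, coeff_X_pow] at hn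
      rcases eq_or_ne n m with rfl | hne
      · exact rfl
      · simp [hne] at hn
  | algebraMap r =>
    constructor
    · intro n hn
      rcases eq_or_ne n 0 with rfl | hne
      · exact Or.inl rfl
      · rw [show (algebraMap k (PowerSeries k)) r = PowerSeries.C r from rfl,
          coeff_C] at hn
        simp [hne] at hn
    · apply Set.Finite.subset (Set.finite_singleton 0)
      intro n hn
      simp only [Set.mem_setOf_eq] at hn
      rcases eq_or_ne n 0 with rfl | hne
      · exact rfl
      · rw [show (algebraMap k (PowerSeries k)) r = PowerSeries.C r from rfl,
          coeff_C] at hn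
        simp [hne] at hn
  | add x y hx hy ihx ihy =>
    constructor
    · intro n hn
      rcases eq_or_ne (coeff n x) 0 with h1 | h1
      · apply ihy.1
        intro h2
        apply hn
        rw [map_add, h1, h2, add_zero]
      · exact ihx.1 n h1
    · apply Set.Finite.subset (ihx.2.union ihy.2)
      intro n hn
      simp only [Set.mem_setOf_eq, map_add] at hn
      by_contra hc
      simp only [Set.mem_union, Set.mem_setOf_eq, not_or, not_not] at hc
      rw [hc.1, hc.2, add_zero] at hn
      exact hn rfl
  | mul x y hx hy ihx ihy =>
    constructor
    · intro n hn
      obtain ⟨i, j, rfl, hi, hj⟩ := coeff_mul_ne_zero hn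
      exact inS_add (ihx.1 i hi) (ihy.1 j hj)
    · apply Set.Finite.subset (Set.Finite.image2 (· + ·) ihx.2 ihy.2)
      intro n hn
      obtain ⟨i, j, rfl, hi, hj⟩ := coeff_mul_ne_zero hn
      exact Set.mem_image2_of_mem hi hj

lemma inS_split {n : ℕ} (h : inS n)
    (hn : ¬(n = 0 ∨ n = 9 ∨ n = 11 ∨ n = 13 ∨ n = 15 ∨ n = 17 ∨ n = 19 ∨ n = 21 ∨ n = 23)) :
    ∃ g m, (g = 9 ∨ g = 11) ∧ inS m ∧ n = g + m := by
  by_cases h34 : n = 34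
  · exact ⟨11, 23, Or.inr rfl, by unfold inS; omega, by omega⟩
  · exact ⟨9, n - 9, Or.inl rfl, by unfold inS at *; omega, by unfold inS at h; omega⟩

lemma gen_mem {m : ℕ} (hm : m = 9 ∨ m = 11 ∨ m = 13 ∨ m = 15 ∨ m = 17 ∨ m = 19 ∨ m = 21
    ∨ m = 23) : (X : PowerSeries k) ^ m ∈ R16 k := by
  apply Algebra.subset_adjoin
  rcases hm with rfl|rfl|rfl|rfl|rfl|rfl|rfl|rfl <;>
    simp [gens16]

lemma X_pow_mem (n : ℕ) (h : inS n) : (X : PowerSeries k) ^ n ∈ R16 k := by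
  induction n using Nat.strong_induction_on with
  | _ n ih =>
    by_cases h0 : n = 0 ∨ n = 9 ∨ n = 11 ∨ n = 13 ∨ n = 15 ∨ n = 17 ∨ n = 19 ∨ n = 21 ∨ n = 23
    · rcases h0 with rfl | h0
      · rw [pow_zero]; exact one_mem _
      · exact gen_mem h0
    · obtain ⟨g, m, hg, hm, rfl⟩ := inS_split h h0
      rw [pow_add]
      refine mul_mem ?_ (ih m (by omega) hm)
      exact gen_mem (by omega)

/-- monomial as an element of R16 -/
noncomputable def mono (n : ℕ) (h : inS n) : R16 k := ⟨X ^ n, X_pow_mem n h⟩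

lemma mono_mul {a b : ℕ} (ha : inS a) (hb : inS b) :
    (mono (k := k) (a + b) (inS_add ha hb)) = mono a ha * mono b hb :=
  Subtype.ext (pow_add X a b)

lemma supp_of_mem_span {G : Set (R16 k)} {P : ℕ → Prop}
    (hG : ∀ g ∈ G, ∀ n, coeff n (g : PowerSeries k) ≠ 0 → P n)
    (hP : ∀ i j, inS i → P j → P (i + j))
    {f : R16 k} (hf : f ∈ Ideal.span G) :
    ∀ n, coeff n (f : PowerSeries k) ≠ 0 → P n := by
  refine Submodule.span_induction
    (p := fun (x : R16 k) (_ : x ∈ Ideal.span G) => ∀ n, coeff n x.val ≠ 0 → P n)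
    (fun g hg => hG g hg) ?_ ?_ ?_ hf
  · intro n hn
    simp only [ZeroMemClass.coe_zero, map_zero, ne_eq, not_true_eq_false] at hn
  · intro x y _ _ ihx ihy n hn
    have hn' : coeff n ((x : PowerSeries k) + (y : PowerSeries k)) ≠ 0 := hn
    rw [map_add] at hn'
    rcases eq_or_ne (coeff n (x : PowerSeries k)) 0 with h1 | h1
    · apply ihy
      intro h2
      rw [h1, h2, add_zero] at hn'
      exact hn' rfl
    · exact ihx n h1
  · intro r x _ ihx n hn
    have hn' : coeff n ((r : PowerSeries k) * (x : PowerSeries k)) ≠ 0 := hn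
    obtain ⟨i, j, rfl, hi, hj⟩ := coeff_mul_ne_zero hn'
    exact hP i j ((R16_support r.2).1 i hi) (ihx j hj)

def memMI (n : ℕ) : Prop :=
  (9 ≤ n ∧ inS (n-9)) ∨ (11 ≤ n ∧ inS (n-11)) ∨ (13 ≤ n ∧ inS (n-13)) ∨ (21 ≤ n ∧ inS (n-21))
def memMJ (n : ℕ) : Prop :=
  (15 ≤ n ∧ inS (n-15)) ∨ (17 ≤ n ∧ inS (n-17)) ∨ (19 ≤ n ∧ inS (n-19)) ∨ (23 ≤ n ∧ inS (n-23))
def memMIJ (n : ℕ) : Prop :=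
  (24 ≤ n ∧ inS (n-24)) ∨ (26 ≤ n ∧ inS (n-26)) ∨ (28 ≤ n ∧ inS (n-28)) ∨
  (30 ≤ n ∧ inS (n-30)) ∨ (32 ≤ n ∧ inS (n-32)) ∨ (34 ≤ n ∧ inS (n-34)) ∨
  (36 ≤ n ∧ inS (n-36)) ∨ (38 ≤ n ∧ inS (n-38)) ∨ (40 ≤ n ∧ inS (n-40)) ∨
  (44 ≤ n ∧ inS (n-44))

lemma memMI_memMJ {n : ℕ} (h1 : memMI n) (h2 : memMJ n) : memMIJ n := by
  unfold memMI memMJ memMIJ inS at *; omega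

lemma inS_memMI {i j : ℕ} (hi : inS i) (hj : memMI j) : memMI (i + j) := by
  unfold memMI inS at *; omega

lemma inS_memMJ {i j : ℕ} (hi : inS i) (hj : memMJ j) : memMJ (i + j) := by
  unfold memMJ inS at *; omega

lemma memMIJ_inS {n : ℕ} (h : memMIJ n) : inS n := by
  unfold memMIJ inS at *; omega

lemma coeff_t16 {n m : ℕ} {h} (hn : coeff n ((t16 k m h : R16 k) : PowerSeries k) ≠ 0) :
    n = m := by
  have h2 : coeff n ((X : PowerSeries k) ^ m) ≠ 0 := hn
  rw [coeff_X_pow] at h2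
  by_contra hne
  simp [hne] at h2

lemma supp_I {f : R16 k} (hf : f ∈ I16 k) : ∀ n, coeff n f.val ≠ 0 → memMI n := by
  refine supp_of_mem_span ?_ (fun i j hi hj => inS_memMI hi hj) hf
  intro g hg n hn
  simp only [Set.mem_insert_iff, Set.mem_singleton_iff] at hg
  rcases hg with rfl|rfl|rfl|rfl <;>
  · have := coeff_t16 hn
    subst this
    unfold memMI inS; omega

lemma supp_J {f : R16 k} (hf : f ∈ J16 k) : ∀ n, coeff n f.val ≠ 0 → memMJ n := by
  refine supp_of_mem_span ?_ (fun i j hi hj => inS_memMJ hi hj) hf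
  intro g hg n hn
  simp only [Set.mem_insert_iff, Set.mem_singleton_iff] at hg
  rcases hg with rfl|rfl|rfl|rfl <;>
  · have := coeff_t16 hn
    subst this
    unfold memMJ inS; omega

lemma mono_mem_I {s' a : ℕ} (hs : inS s') (ha9 : a = 9 ∨ a = 11 ∨ a = 13 ∨ a = 21)
    (h : inS (s' + a)) : (mono (k := k) (s' + a) h : R16 k) ∈ I16 k := by
  have ha : inS a := by unfold inS; omega
  have heq : mono (k := k) (s' + a) h = mono s' hs * mono a ha := Subtype.ext (pow_add X s' a)
  rw [heq]
  apply Ideal.mul_mem_left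
  apply Ideal.subset_span
  rcases ha9 with rfl|rfl|rfl|rfl
  · exact Set.mem_insert_iff.mpr (Or.inl (Subtype.ext rfl))
  · exact Set.mem_insert_iff.mpr (Or.inr (Set.mem_insert_iff.mpr (Or.inl (Subtype.ext rfl))))
  · exact Set.mem_insert_iff.mpr (Or.inr (Set.mem_insert_iff.mpr (Or.inr
      (Set.mem_insert_iff.mpr (Or.inl (Subtype.ext rfl))))))
  · exact Set.mem_insert_iff.mpr (Or.inr (Set.mem_insert_iff.mpr (Or.inr
      (Set.mem_insert_iff.mpr (Or.inr (Set.mem_singleton_iff.mpr (Subtype.ext rfl)))))))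

lemma gen_mem_J {b : ℕ} (hb : b = 15 ∨ b = 17 ∨ b = 19 ∨ b = 23) (hb' : inS b) :
    (mono (k := k) b hb' : R16 k) ∈ J16 k := by
  apply Ideal.subset_span
  rcases hb with rfl|rfl|rfl|rfl
  · exact Set.mem_insert_iff.mpr (Or.inl (Subtype.ext rfl))
  · exact Set.mem_insert_iff.mpr (Or.inr (Set.mem_insert_iff.mpr (Or.inl (Subtype.ext rfl))))
  · exact Set.mem_insert_iff.mpr (Or.inr (Set.mem_insert_iff.mpr (Or.inr
      (Set.mem_insert_iff.mpr (Or.inl (Subtype.ext rfl))))))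
  · exact Set.mem_insert_iff.mpr (Or.inr (Set.mem_insert_iff.mpr (Or.inr
      (Set.mem_insert_iff.mpr (Or.inr (Set.mem_singleton_iff.mpr (Subtype.ext rfl)))))))

lemma mono_mem_IJ {m : ℕ} (hm : memMIJ m) (h : inS m) :
    mono (k := k) m h ∈ I16 k * J16 k := by
  have main : ∀ a b s', (a = 9 ∨ a = 11 ∨ a = 13 ∨ a = 21) →
      (b = 15 ∨ b = 17 ∨ b = 19 ∨ b = 23) → inS s' → m = s' + a + b →
      mono (k := k) m h ∈ I16 k * J16 k := by
    intro a b s' ha hb hs hm2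
    have hb' : inS b := by unfold inS; omega
    have hsa : inS (s' + a) := inS_add hs (by unfold inS; omega)
    have heq : mono (k := k) m h = mono (s' + a) hsa * mono b hb' := by
      apply Subtype.ext
      show (X : PowerSeries k) ^ m = X ^ (s' + a) * X ^ b
      rw [← pow_add, ← hm2]
    rw [heq]
    exact Ideal.mul_mem_mul (mono_mem_I hs ha hsa) (gen_mem_J hb hb')
  unfold memMIJ at hm
  rcases hm with ⟨h1,h2⟩|⟨h1,h2⟩|⟨h1,h2⟩|⟨h1,h2⟩|⟨h1,h2⟩|⟨h1,h2⟩|⟨h1,h2⟩|⟨h1,h2⟩|⟨h1,h2⟩|⟨h1,h2⟩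
  · exact main 9 15 (m-24) (by omega) (by omega) h2 (by omega)
  · exact main 11 15 (m-26) (by omega) (by omega) h2 (by omega)
  · exact main 13 15 (m-28) (by omega) (by omega) h2 (by omega)
  · exact main 11 19 (m-30) (by omega) (by omega) h2 (by omega)
  · exact main 9 23 (m-32) (by omega) (by omega) h2 (by omega)
  · exact main 11 23 (m-34) (by omega) (by omega) h2 (by omega)
  · exact main 13 23 (m-36) (by omega) (by omega) h2 (by omega)
  · exact main 21 17 (m-38) (by omega) (by omega) h2 (by omega)
  · exact main 21 19 (m-40) (by omega) (by omega) h2 (by omega)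
  · exact main 21 23 (m-44) (by omega) (by omega) h2 (by omega)

lemma mem_IJ_of_supp_aux (s : Finset ℕ) :
    ∀ f : R16 k, (∀ n, coeff n f.val ≠ 0 → n ∈ s) →
    (∀ n, coeff n f.val ≠ 0 → memMIJ n) → f ∈ I16 k * J16 k := by
  induction s using Finset.strongInduction with
  | _ s ih =>
    intro f hs hm
    by_cases hz : ∀ n, coeff n f.val = 0
    · have hf0 : f = 0 := Subtype.ext (PowerSeries.ext fun n => by rw [hz n]; simp)
      rw [hf0]; exact zero_mem _
    push_neg at hz
    obtain ⟨m, hmne⟩ := hz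
    have hmem : m ∈ s := hs m hmne
    have hmIJ : memMIJ m := hm m hmne
    have hin : inS m := memMIJ_inS hmIJ
    set c : k := coeff m f.val with hc
    set u : R16 k := c • mono m hin with hu
    have huval : u.val = c • (X : PowerSeries k) ^ m := rfl
    have hucoeff : ∀ n, coeff n u.val = if n = m then c else 0 := by
      intro n
      rw [huval, map_smul, coeff_X_pow]
      split <;> simp
    have humem : u ∈ I16 k * J16 k := by
      rw [hu, Algebra.smul_def]
      exact Ideal.mul_mem_left _ _ (mono_mem_IJ hmIJ hin)
    have hsub : (f - u).val = f.val - u.val := rfl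
    have hrest : f - u ∈ I16 k * J16 k := by
      refine ih (s.erase m) (Finset.erase_ssubset hmem) (f - u) ?_ ?_
      · intro n hn
        rw [hsub, map_sub, hucoeff] at hn
        rcases eq_or_ne n m with rfl | hne
        · simp [hc] at hn
        · simp only [hne, if_false, sub_zero] at hn
          exact Finset.mem_erase.mpr ⟨hne, hs n hn⟩
      · intro n hn
        rw [hsub, map_sub, hucoeff] at hn
        rcases eq_or_ne n m with rfl | hne
        · simp [hc] at hn
        · simp only [hne, if_false, sub_zero] at hn
          exact hm n hn
    have : f = u + (f - u) := by ring
    rw [this]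
    exact add_mem humem hrest

theorem inter_eq (k : Type) [Field k] : I16 k ⊓ J16 k = I16 k * J16 k := by
  refine le_antisymm ?_ Ideal.mul_le_inf
  rintro f ⟨hfI, hfJ⟩
  have hIJ : ∀ n, coeff n f.val ≠ 0 → memMIJ n :=
    fun n hn => memMI_memMJ (supp_I hfI n hn) (supp_J hfJ n hn)
  have hfin := (R16_support f.2).2
  exact mem_IJ_of_supp_aux hfin.toFinset f (fun n hn => hfin.mem_toFinset.mpr hn) hIJ


end PartA

/-- For `R = k[[t⁹,…,t²³]]`, `I = (t⁹,t¹¹,t¹³,t²¹)` and `J = (t¹⁵,t¹⁷,t¹⁹,t²³)`: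
`I ∩ J = I·J`, and consequently `Tor₁^R(R/I, R/J) = 0`. -/
theorem stmt16 (k : Type) [Field k] :
    I16 k ⊓ J16 k = I16 k * J16 k ∧
    Subsingleton (TorM (R16 k) 1 (R16 k ⧸ I16 k) (R16 k ⧸ J16 k)) := by
  have h := inter_eq k
  exact ⟨h, tor_subsingleton _ _ h.le⟩
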